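/- Kronecker's theorem: if α is a nonzero algebraic integer all of whose Galois conjugates (roots of its minimal polynomial over ℚ) have complex absolute value 1, then α is a root of unity. -/

import Mathlib

theorem kronecker_theorem (α : ℂ) (hα0 : α ≠ 0) (hint : IsIntegral ℤ α)
    (hconj : ∀ z : ℂ, Polynomial.aeval z (minpoly ℚ α) = 0 → ‖z‖ = 1) :
    ∃ n : ℕ, 0 < n ∧ α ^ n = 1 := by
  have hQ : IsIntegral ℚ α := hint.tower_top
  let K := IntermediateField.adjoin ℚ ({α} : Set ℂ)
  haveI : FiniteDimensional ℚ K := IntermediateField.adjoin.finiteDimensional hQ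
  haveI : NumberField K := ⟨⟩
  let x : K := IntermediateField.AdjoinSimple.gen ℚ α
  have hx : (algebraMap K ℂ) x = α := rfl
  have hxi : IsIntegral ℤ x := by
    rw [← isIntegral_algebraMap_iff (algebraMap K ℂ).injective, hx]; exact hint
  have hmin : minpoly ℚ x = minpoly ℚ α := IntermediateField.minpoly_gen ℚ α
  obtain ⟨n, hn, hpow⟩ := NumberField.Embeddings.pow_eq_one_of_norm_eq_one K ℂ hxi
    (fun φ => by
      apply hconj
      have : Polynomial.aeval (φ x) (minpoly ℚ x) = 0 := by
        have h := Polynomial.aeval_algHom_apply (φ.toRatAlgHom) x (minpoly ℚ x)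
        rw [minpoly.aeval, map_zero] at h
        exact h
      rwa [hmin] at this)
  refine ⟨n, hn, ?_⟩
  have := congrArg (algebraMap K ℂ) hpow
  rwa [map_pow, hx, map_one] at this
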